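/- If I is a quasinormal ideal on κ extending the nonstationary ideal NS_κ, then I is pleasant, and therefore normal. In particular, every selective ideal extending NS_κ is normal. -/

import Mathlib

open Set

namespace PaperIdeals

/-- Diagonal union of a family `X` indexed by a set `A` of ordinals. -/
def diagU (A : Set Ordinal.{0}) (X : Ordinal.{0} → Set Ordinal.{0}) : Set Ordinal.{0} :=
  {ξ | ∃ α < ξ, α ∈ A ∧ ξ ∈ X α}

/-- `X` is bounded below `κ`. -/
def BddIn (κ : Cardinal.{0}) (X : Set Ordinal.{0}) : Prop := ∃ θ < κ.ord, X ⊆ Iio θ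

/-- `J` is a `<κ`-complete ideal on `κ` containing all singletons,
closed under subsets and (finite and small) unions. -/
def IsIdeal (κ : Cardinal.{0}) (J : Set Ordinal.{0} → Prop) : Prop :=
  (∀ X, J X → X ⊆ Iio κ.ord) ∧
  (∀ X Y, J X → Y ⊆ X → J Y) ∧
  (∀ X Y, J X → J Y → J (X ∪ Y)) ∧
  (∀ ξ < κ.ord, J {ξ}) ∧
  (∀ θ : Ordinal.{0}, θ.card < κ → ∀ X : Ordinal.{0} → Set Ordinal.{0},
    (∀ α, J (X α)) → J (⋃ α ∈ Iio θ, X α))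

def Proper (κ : Cardinal.{0}) (J : Set Ordinal.{0} → Prop) : Prop := ¬ J (Iio κ.ord)

/-- The coideal `I⁺`. -/
def Pos (κ : Cardinal.{0}) (J : Set Ordinal.{0} → Prop) (X : Set Ordinal.{0}) : Prop :=
  X ⊆ Iio κ.ord ∧ ¬ J X

/-- The dual filter `I*`. -/
def Dual (κ : Cardinal.{0}) (J : Set Ordinal.{0} → Prop) (X : Set Ordinal.{0}) : Prop :=
  X ⊆ Iio κ.ord ∧ J (Iio κ.ord \ X)

/-- The restriction `I ↾ A`. -/
def restrict (κ : Cardinal.{0}) (J : Set Ordinal.{0} → Prop) (A : Set Ordinal.{0})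
    (X : Set Ordinal.{0}) : Prop :=
  X ⊆ Iio κ.ord ∧ J (X ∩ A)

/-- Pleasant: closed under diagonal unions indexed by sets in the ideal. -/
def Pleasant (J : Set Ordinal.{0} → Prop) : Prop :=
  ∀ A, J A → ∀ X : Ordinal.{0} → Set Ordinal.{0}, (∀ α, J (X α)) → J (diagU A X)

/-- Prepleasant: closed under diagonal unions of bounded sets indexed by sets in the ideal. -/
def Prepleasant (κ : Cardinal.{0}) (J : Set Ordinal.{0} → Prop) : Prop :=
  ∀ Q, J Q → ∀ B : Ordinal.{0} → Set Ordinal.{0}, (∀ α, BddIn κ (B α)) → J (diagU Q B)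

/-- Normal: closed under full `κ`-indexed diagonal unions. -/
def Normal (κ : Cardinal.{0}) (J : Set Ordinal.{0} → Prop) : Prop :=
  ∀ X : Ordinal.{0} → Set Ordinal.{0}, (∀ α, J (X α)) → J (diagU (Iio κ.ord) X)

/-- Quasinormal ideal. -/
def Quasinormal (κ : Cardinal.{0}) (J : Set Ordinal.{0} → Prop) : Prop :=
  ∀ X : Ordinal.{0} → Set Ordinal.{0}, (∀ α, J (X α)) →
    ∃ Q, Dual κ J Q ∧ J (diagU Q X)

/-- Club subset of `κ`: unbounded in `κ.ord` and closed under limits. -/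
def IsClubIn (κ : Cardinal.{0}) (C : Set Ordinal.{0}) : Prop :=
  C ⊆ Iio κ.ord ∧ (∀ α < κ.ord, ∃ β ∈ C, α < β) ∧
  (∀ δ < κ.ord, Order.IsSuccLimit δ → (∀ α < δ, ∃ β ∈ C, α < β ∧ β < δ) → δ ∈ C)

/-- Stationary subset of `κ`. -/
def StatIn (κ : Cardinal.{0}) (S : Set Ordinal.{0}) : Prop :=
  S ⊆ Iio κ.ord ∧ ∀ C, IsClubIn κ C → (S ∩ C).Nonempty

/-- The nonstationary ideal `NS κ`. -/
def NS (κ : Cardinal.{0}) (X : Set Ordinal.{0}) : Prop :=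
  X ⊆ Iio κ.ord ∧ ∃ C, IsClubIn κ C ∧ X ∩ C = ∅

/-- Membership in the ideal generated by a family `S`. -/
def genIdeal (κ : Cardinal.{0}) (S : Set Ordinal.{0} → Prop) (X : Set Ordinal.{0}) : Prop :=
  ∀ K, IsIdeal κ K → (∀ Y, S Y → K Y) → K X

/-- Membership in the pleasant closure of `S` (smallest pleasant ideal containing `S`). -/
def PClosure (κ : Cardinal.{0}) (S : Set Ordinal.{0} → Prop) (X : Set Ordinal.{0}) : Prop :=
  ∀ K, IsIdeal κ K → Pleasant K → (∀ Y, S Y → K Y) → K X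

/-- Membership in the prepleasant closure of `S`. -/
def PPClosure (κ : Cardinal.{0}) (S : Set Ordinal.{0} → Prop) (X : Set Ordinal.{0}) : Prop :=
  ∀ K, IsIdeal κ K → Prepleasant κ K → (∀ Y, S Y → K Y) → K X

/-- p-point. -/
def PPoint (κ : Cardinal.{0}) (J : Set Ordinal.{0} → Prop) : Prop :=
  ∀ f : Ordinal.{0} → Ordinal.{0}, (∀ ξ : Ordinal.{0}, J {α | α < κ.ord ∧ f α = ξ}) →
    ∃ X, Dual κ J X ∧ ∀ ξ : Ordinal.{0}, BddIn κ {α | α ∈ X ∧ f α = ξ}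

/-- q-point. -/
def QPoint (κ : Cardinal.{0}) (J : Set Ordinal.{0} → Prop) : Prop :=
  ∀ f : Ordinal.{0} → Ordinal.{0}, (∀ ξ : Ordinal.{0}, BddIn κ {α | α < κ.ord ∧ f α = ξ}) →
    ∃ X, Dual κ J X ∧ Set.InjOn f X

/-- `L = {λ + 1 : λ < κ a limit ordinal}`. -/
def LSet (κ : Cardinal.{0}) : Set Ordinal.{0} :=
  {x | ∃ lam : Ordinal.{0}, Order.IsSuccLimit lam ∧ x = lam + 1 ∧ x < κ.ord}

/-- `B(Y) = {α - 1 : α ∈ Y}` for a set `Y` of successor ordinals. -/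
def BSet (Y : Set Ordinal.{0}) : Set Ordinal.{0} := {γ | γ + 1 ∈ Y}

/-- `W = {λ < κ : cof λ = ω}`. -/
def WSet (κ : Cardinal.{0}) : Set Ordinal.{0} :=
  {lam | lam < κ.ord ∧ lam.cof = Cardinal.aleph0}

/-- Węglorz's ideal `J_κ`. -/
def Weglorz (κ : Cardinal.{0}) (X : Set Ordinal.{0}) : Prop :=
  X ⊆ Iio κ.ord ∧ ∃ (f : Ordinal.{0} → Ordinal.{0}) (θ : Cardinal.{0}), θ < κ ∧
    (∀ α ∈ X, α ≠ 0 → f α < α) ∧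
    ∀ ξ : Ordinal.{0}, Cardinal.mk {α : Ordinal.{0} // α ∈ X ∧ f α = ξ} ≤ Cardinal.lift.{1} θ

section Aux

variable {κ : Cardinal.{0}} {J : Set Ordinal.{0} → Prop}

lemma aux_ord_limit (hunc : Cardinal.aleph0 < κ) : Order.IsSuccLimit κ.ord :=
  Cardinal.isSuccLimit_ord (le_of_lt hunc)

lemma aux_succ_lt (hunc : Cardinal.aleph0 < κ) {α : Ordinal.{0}} (h : α < κ.ord) :
    α + 1 < κ.ord := by
  rw [Ordinal.add_one_eq_succ]
  exact (aux_ord_limit hunc).succ_lt h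

lemma aux_empty (hJ : IsIdeal κ J) (hunc : Cardinal.aleph0 < κ) : J ∅ := by
  have h0 : (0 : Ordinal) < κ.ord := by
    rw [Cardinal.lt_ord, Ordinal.card_zero]
    exact lt_trans Cardinal.aleph0_pos hunc
  exact hJ.2.1 _ _ (hJ.2.2.2.1 0 h0) (empty_subset _)

lemma aux_Iio (hJ : IsIdeal κ J) (hunc : Cardinal.aleph0 < κ) {θ : Ordinal.{0}}
    (hθ : θ < κ.ord) : J (Iio θ) := by
  have := hJ.2.2.2.2 θ (Cardinal.lt_ord.mp hθ)
    (fun α => if α < κ.ord then {α} else ∅) (by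
      intro α
      by_cases h : α < κ.ord
      · simpa [h] using hJ.2.2.2.1 α h
      · simpa [h] using aux_empty hJ hunc)
  refine hJ.2.1 _ _ this ?_
  intro x hx
  simp only [mem_iUnion]
  exact ⟨x, hx, by simp [lt_trans hx hθ]⟩

/-- A dual set is unbounded in `κ.ord`. -/
lemma aux_dual_unbounded (hJ : IsIdeal κ J) (hprop : Proper κ J)
    (hunc : Cardinal.aleph0 < κ) {Q : Set Ordinal.{0}} (hQ : Dual κ J Q) :
    ∀ α < κ.ord, ∃ β ∈ Q, α < β := by
  intro α hα
  by_contra h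
  push_neg at h
  have hQsub : Q ⊆ Iio (α + 1) := by
    intro x hx
    exact lt_of_le_of_lt (h x hx) (lt_add_one α)
  have hQJ : J Q := hJ.2.1 _ _ (aux_Iio hJ hunc (aux_succ_lt hunc hα)) hQsub
  have : J (Iio κ.ord) := by
    refine hJ.2.1 _ _ (hJ.2.2.1 _ _ hQJ hQ.2) ?_
    intro x hx
    by_cases hxQ : x ∈ Q
    · exact Or.inl hxQ
    · exact Or.inr ⟨hx, hxQ⟩
  exact hprop this

/-- The set of ordinals below `κ.ord` in which `Q` is unbounded. -/
def CSet (κ : Cardinal.{0}) (Q : Set Ordinal.{0}) : Set Ordinal.{0} :=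
  {δ | δ < κ.ord ∧ ∀ γ < δ, ∃ β ∈ Q, γ < β ∧ β < δ}

lemma aux_CSet_club (hreg : κ.IsRegular) (hunc : Cardinal.aleph0 < κ)
    {Q : Set Ordinal.{0}} (hQsub : Q ⊆ Iio κ.ord)
    (hQunb : ∀ α < κ.ord, ∃ β ∈ Q, α < β) :
    IsClubIn κ (CSet κ Q) := by
  refine ⟨fun δ hδ => hδ.1, ?_, ?_⟩
  · -- unbounded
    intro α hα
    have hg : ∀ β : Ordinal.{0}, ∃ γ : Ordinal.{0}, β < κ.ord → γ ∈ Q ∧ β < γ := by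
      intro β
      by_cases h : β < κ.ord
      · obtain ⟨γ, h1, h2⟩ := hQunb β h
        exact ⟨γ, fun _ => ⟨h1, h2⟩⟩
      · exact ⟨0, fun h' => absurd h' h⟩
    choose g hg using hg
    set f : ℕ → Ordinal.{0} := fun n => g^[n] (g α) with hf
    have hsucc : ∀ n, f (n + 1) = g (f n) := by
      intro n
      simp only [hf, Function.iterate_succ_apply']
    have key : ∀ n, f n ∈ Q := by
      intro n
      induction n with
      | zero => exact (hg α hα).1
      | succ n ih =>
        rw [hsucc n]
        exact (hg (f n) (hQsub ih)).1
    have hfκ : ∀ n, f n < κ.ord := fun n => hQsub (key n)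
    have hlt : ∀ n, f n < f (n + 1) := by
      intro n
      rw [hsucc n]
      exact (hg (f n) (hfκ n)).2
    set δ : Ordinal.{0} := iSup f with hδ
    have hδκ : δ < κ.ord := by
      refine Cardinal.iSup_lt_ord_of_isRegular hreg ?_ hfκ
      rw [Cardinal.mk_nat]
      exact hunc
    have hle : ∀ n, f n ≤ δ := fun n => le_ciSup (Ordinal.bddAbove_range f) n
    have hflδ : ∀ n, f n < δ := fun n => lt_of_lt_of_le (hlt n) (hle (n + 1))
    refine ⟨δ, ⟨hδκ, ?_⟩, lt_of_lt_of_le (hg α hα).2 (hle 0)⟩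
    intro γ hγ
    obtain ⟨n, hn⟩ := (lt_ciSup_iff (Ordinal.bddAbove_range f)).mp hγ
    exact ⟨f n, key n, hn, hflδ n⟩
  · -- closed
    intro δ hδκ _ hcl
    refine ⟨hδκ, ?_⟩
    intro γ hγ
    obtain ⟨β, hβC, h1, h2⟩ := hcl γ hγ
    obtain ⟨q, hq, hq1, hq2⟩ := hβC.2 γ h1
    exact ⟨q, hq, hq1, lt_trans hq2 h2⟩

end Aux

/-- A quasinormal ideal extending `NS κ` is pleasant, and therefore normal. -/
theorem stmt11 (κ : Cardinal.{0}) (hreg : κ.IsRegular) (hunc : Cardinal.aleph0 < κ)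
    (J : Set Ordinal.{0} → Prop) (hJ : IsIdeal κ J) (hprop : Proper κ J)
    (hext : ∀ X, NS κ X → J X) (hq : Quasinormal κ J) :
    Pleasant J ∧ Normal κ J := by
  classical
  have hpl : Pleasant J := by
    intro A hA X hX
    set Y : Ordinal.{0} → Set Ordinal.{0} := fun β => if β ∈ A then X β else ∅ with hY
    set Z : Ordinal.{0} → Set Ordinal.{0} :=
      fun α => if α < κ.ord then ⋃ β ∈ Iio (α + 1), Y β else ∅ with hZ
    have hZJ : ∀ α, J (Z α) := by
      intro α
      by_cases h : α < κ.ord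
      · simp only [hZ, if_pos h]
        refine hJ.2.2.2.2 (α + 1) (Cardinal.lt_ord.mp (aux_succ_lt hunc h)) Y ?_
        intro β
        by_cases hb : β ∈ A
        · simpa [hY, hb] using hX β
        · simpa [hY, hb] using aux_empty hJ hunc
      · simpa [hZ, h] using aux_empty hJ hunc
    obtain ⟨Q, hQd, hQZ⟩ := hq Z hZJ
    have hQsub : Q ⊆ Iio κ.ord := hQd.1
    have hQunb := aux_dual_unbounded hJ hprop hunc hQd
    have hCclub := aux_CSet_club hreg hunc hQsub hQunb
    have hNS : J (Iio κ.ord \ CSet κ Q) := by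
      refine hext _ ⟨diff_subset, CSet κ Q, hCclub, ?_⟩
      ext x
      simp only [mem_inter_iff, mem_diff, mem_empty_iff_false, iff_false]
      tauto
    have hsub : diagU A X ⊆ diagU Q Z ∪ (Iio κ.ord \ CSet κ Q) := by
      rintro ξ ⟨α, hαξ, hαA, hξX⟩
      have hξκ : ξ < κ.ord := hJ.1 _ (hX α) hξX
      by_cases hcase : ∃ β ∈ Q, α ≤ β ∧ β < ξ
      · obtain ⟨β, hβQ, hαβ, hβξ⟩ := hcase
        left
        refine ⟨β, hβξ, hβQ, ?_⟩
        have hβκ : β < κ.ord := hQsub hβQ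
        simp only [hZ, if_pos hβκ, mem_iUnion]
        exact ⟨α, lt_of_le_of_lt hαβ (lt_add_one β), by simp [hY, hαA, hξX]⟩
      · right
        refine ⟨hξκ, fun hξC => hcase ?_⟩
        obtain ⟨β, hβQ, h1, h2⟩ := hξC.2 α hαξ
        exact ⟨β, hβQ, le_of_lt h1, h2⟩
    exact hJ.2.1 _ _ (hJ.2.2.1 _ _ hQZ hNS) hsub
  refine ⟨hpl, ?_⟩
  intro X hX
  obtain ⟨Q, hQd, hQX⟩ := hq X hX
  have hAX : J (diagU (Iio κ.ord \ Q) X) := hpl _ hQd.2 X hX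
  have hsub : diagU (Iio κ.ord) X ⊆ diagU Q X ∪ diagU (Iio κ.ord \ Q) X := by
    rintro ξ ⟨α, hαξ, hακ, hξ⟩
    by_cases hq' : α ∈ Q
    · exact Or.inl ⟨α, hαξ, hq', hξ⟩
    · exact Or.inr ⟨α, hαξ, ⟨hακ, hq'⟩, hξ⟩
  exact hJ.2.1 _ _ (hJ.2.2.1 _ _ hQX hAX) hsub

end PaperIdeals
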